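/- arXiv:math/0411089 — 2 statements merged into one kernel-verified Lean document; each statement's English description precedes it below -/
import Mathlib

section
/- Let q ≥ 2, let F_q be a finite field with q elements, and let ν_i be the number of monic irreducible polynomials of degree i over F_q. Then ν_i is asymptotic to q^i/i as i → ∞; that is, the sequence i ↦ ν_i · i / q^i tends to 1. -/
open Polynomial Filter Topology

open scoped Classical in
/-- The excess of a polynomial over a field: total multiplicity of its irreducible
factorization minus the number of distinct irreducible factors. -/
noncomputable def excess {Fq : Type*} [Field Fq] (f : Polynomial Fq) : ℕ :=
  (UniqueFactorizationMonoid.normalizedFactors f).card -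
    (UniqueFactorizationMonoid.normalizedFactors f).toFinset.card

/-- `excessCount Fq n k` is the number of monic polynomials of degree `n` over `Fq`
with excess `k` (the quantity `e_{n,k}`). -/
noncomputable def excessCount (Fq : Type*) [Field Fq] (n k : ℕ) : ℕ :=
  {f : Polynomial Fq | f.Monic ∧ f.natDegree = n ∧ excess f = k}.ncard

/-- `nu Fq i` is the number of monic irreducible polynomials of degree `i` over `Fq`. -/
noncomputable def nu (Fq : Type*) [Field Fq] (i : ℕ) : ℕ :=
  {p : Polynomial Fq | p.Monic ∧ Irreducible p ∧ p.natDegree = i}.ncard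

/-- `sqfCount Fq n` is the number of squarefree monic polynomials of degree `n` over `Fq`
(the quantity `e_{n,0}`). -/
noncomputable def sqfCount (Fq : Type*) [Field Fq] (n : ℕ) : ℕ :=
  {f : Polynomial Fq | f.Monic ∧ f.natDegree = n ∧ Squarefree f}.ncard

lemma finite_monic_deg {Fq : Type*} [Field Fq] [Fintype Fq] (d : ℕ) :
    {p : Polynomial Fq | p.Monic ∧ p.natDegree = d}.Finite := by
  have : {p : Polynomial Fq | p.Monic ∧ p.natDegree = d} ⊆
      (fun v : Fin (d+1) → Fq =>
        ∑ i : Fin (d+1), Polynomial.monomial i.1 (v i)) '' Set.univ := by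
    intro p hp
    refine ⟨fun i => p.coeff i, Set.mem_univ _, ?_⟩
    conv_rhs => rw [p.as_sum_range' (d+1) (by rw [hp.2]; omega)]
    exact Fin.sum_univ_eq_sum_range (fun i => Polynomial.monomial i (p.coeff i)) (d+1)
  exact Set.Finite.subset (Set.toFinite _) this

lemma irr_dvd {Fq : Type*} [Field Fq] [Fintype Fq] {f : Polynomial Fq} (hm : f.Monic)
    (hi : Irreducible f) {n : ℕ} (hd : f.natDegree ∣ n) :
    f ∣ X ^ (Fintype.card Fq) ^ n - X := by
  classical
  set q := Fintype.card Fq with hq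
  have hf0 : f ≠ 0 := hm.ne_zero
  haveI : Fact (Irreducible f) := ⟨hi⟩
  let pb := AdjoinRoot.powerBasis hf0
  haveI : Module.Finite Fq (AdjoinRoot f) := pb.finite
  haveI : Finite (AdjoinRoot f) := Module.finite_of_finite Fq
  haveI : Fintype (AdjoinRoot f) := Fintype.ofFinite _
  have hcard : Fintype.card (AdjoinRoot f) = q ^ f.natDegree := by
    rw [Module.card_fintype pb.basis, Fintype.card_fin]; rw [show pb.dim = f.natDegree from AdjoinRoot.powerBasis_dim hf0]
  set r := AdjoinRoot.root f
  have hmin : minpoly Fq r = f := by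
    have := AdjoinRoot.minpoly_root hf0
    rwa [hm.leadingCoeff, inv_one, map_one, mul_one] at this
  have hr : r ^ q ^ n = r := by
    obtain ⟨c, rfl⟩ := hd
    rw [pow_mul, ← hcard]
    exact FiniteField.pow_card_pow c r
  have : (Polynomial.aeval r) (X ^ q ^ n - X : Polynomial Fq) = 0 := by
    simp [hr]
  have := minpoly.dvd Fq r this
  rwa [hmin] at this


lemma card_splitting (Fq : Type*) [Field Fq] [Fintype Fq] {n : ℕ} (hn : n ≠ 0) :
    Nat.card (SplittingField (X ^ (Fintype.card Fq) ^ n - X : Polynomial Fq))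
      = (Fintype.card Fq) ^ n := by
  classical
  set q := Fintype.card Fq with hq
  have hq2 : 1 < q := Fintype.one_lt_card
  set p := ringChar Fq with hp
  haveI : CharP Fq p := ringChar.charP Fq
  obtain ⟨m, hpp, hqm⟩ := FiniteField.card Fq p
  haveI : Fact p.Prime := ⟨hpp⟩
  set k := (m : ℕ) * n with hk
  have hqn : q ^ n = p ^ k := by rw [hq, hqm, hk, pow_mul]
  set g : Polynomial Fq := X ^ q ^ n - X with hg
  set L := SplittingField g with hL
  haveI : Finite L := Module.finite_of_finite Fq
  haveI : Fintype L := Fintype.ofFinite L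
  haveI : CharP L p := (Algebra.charP_iff Fq L p).mp inferInstance
  have hpdvd : p ∣ q ^ n := by rw [hqn]; exact dvd_pow_self p (by positivity)
  have hsep : g.Separable := galois_poly_separable p (q ^ n) hpdvd
  have aux : g ≠ 0 := FiniteField.X_pow_card_pow_sub_X_ne_zero _ hn hq2
  have key : Fintype.card (g.rootSet L) = g.natDegree :=
    card_rootSet_eq_natDegree hsep (SplittingField.splits g)
  have ndeg : g.natDegree = q ^ n := FiniteField.X_pow_card_pow_sub_X_natDegree_eq _ hn hq2
  have key' : Nat.card (g.rootSet L) = g.natDegree := by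
    rw [Nat.card_eq_fintype_card]; exact key
  suffices huniv : g.rootSet L = Set.univ by
    rw [huniv, ndeg] at key'
    rw [Nat.card_coe_set_eq, Set.ncard_univ] at key'
    exact key'
  rw [Set.eq_univ_iff_forall]
  suffices h : ∀ (x) (_ : x ∈ (⊤ : Subalgebra Fq L)), x ∈ g.rootSet L by simpa using h
  rw [← SplittingField.adjoin_rootSet]
  simp_rw [Algebra.mem_adjoin_iff]
  intro x hx
  refine Subring.closure_induction ?_ ?_ ?_ ?_ ?_ ?_ hx <;> simp_rw [mem_rootSet_of_ne aux] <;>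
    simp_rw [hg, hqn, map_sub, aeval_X_pow, aeval_X, sub_eq_zero]
  · rintro x (⟨r, rfl⟩ | hx)
    · rw [← map_pow, ← hqn, FiniteField.pow_card_pow]
    · have aux2 : (X ^ p ^ k - X : Polynomial Fq) ≠ 0 := by rw [← hqn]; exact aux
      rw [mem_rootSet_of_ne aux2] at hx
      have := hx
      rw [map_sub, aeval_X_pow, aeval_X, sub_eq_zero] at this
      exact this
  · exact zero_pow (pow_ne_zero _ hpp.pos.ne')
  · exact one_pow _
  · intro x y _ _ hx hy
    rw [add_pow_char_pow, hx, hy]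
  · intro x _ hx
    rw [neg_pow, hx, neg_one_pow_char_pow]
    exact neg_one_mul x
  · intro x y _ _ hx hy
    rw [mul_pow, hx, hy]

open scoped IntermediateField in
lemma sum_identity (Fq : Type*) [Field Fq] [Fintype Fq] {n : ℕ} (hn : n ≠ 0) :
    (Fintype.card Fq) ^ n = ∑ d ∈ n.divisors, d * nu Fq d := by
  classical
  set q := Fintype.card Fq with hq
  have hq2 : 1 < q := Fintype.one_lt_card
  set g : Polynomial Fq := X ^ q ^ n - X with hg
  have aux : g ≠ 0 := FiniteField.X_pow_card_pow_sub_X_ne_zero _ hn hq2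
  set L := SplittingField g with hL
  haveI : Finite L := Module.finite_of_finite Fq
  haveI : Fintype L := Fintype.ofFinite L
  have hcardL : Fintype.card L = q ^ n := by
    rw [← Nat.card_eq_fintype_card]; exact card_splitting Fq hn
  have hrank : Module.finrank Fq L = n := by
    have := Module.card_fintype (Module.finBasis Fq L)
    rw [hcardL, ← hq, Fintype.card_fin] at this
    exact Nat.pow_right_injective hq2 this.symm
  -- the finsets of monic irreducible polynomials of each degree
  set I : ℕ → Finset (Polynomial Fq) := fun d =>
    ((finite_monic_deg d).subset (fun p hp => ⟨hp.1, hp.2.2⟩) :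
      {p : Polynomial Fq | p.Monic ∧ Irreducible p ∧ p.natDegree = d}.Finite).toFinset with hI
  have hInu : ∀ d, (I d).card = nu Fq d := by
    intro d
    exact (Set.ncard_eq_toFinset_card _ _).symm
  have hIdeg : ∀ d, ∀ f ∈ I d, f.Monic ∧ Irreducible f ∧ f.natDegree = d := by
    intro d f hf
    rwa [hI, Set.Finite.mem_toFinset] at hf
  set T : Finset (Polynomial Fq) := n.divisors.biUnion I with hT
  have hmem : ∀ x : L, minpoly Fq x ∈ T := by
    intro x
    have hint : IsIntegral Fq x := IsIntegral.of_finite Fq x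
    have hdvd : (minpoly Fq x).natDegree ∣ n := by
      have h1 : Module.finrank Fq Fq⟮ x ⟯ = (minpoly Fq x).natDegree :=
        IntermediateField.adjoin.finrank hint
      have h2 : Module.finrank Fq Fq⟮ x ⟯ * Module.finrank Fq⟮ x ⟯ L = Module.finrank Fq L :=
        Module.finrank_mul_finrank Fq Fq⟮ x ⟯ L
      exact ⟨Module.finrank Fq⟮ x ⟯ L, by rw [← hrank, ← h2, h1]⟩
    refine Finset.mem_biUnion.mpr ⟨(minpoly Fq x).natDegree, Nat.mem_divisors.mpr ⟨hdvd, hn⟩, ?_⟩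
    rw [hI, Set.Finite.mem_toFinset]
    exact ⟨minpoly.monic hint, minpoly.irreducible hint, rfl⟩
  have hfiber : ∀ d ∈ n.divisors, ∀ f ∈ I d,
      (Finset.univ.filter (fun x : L => minpoly Fq x = f)).card = d := by
    intro d hd f hf
    obtain ⟨hmon, hirr, hdeg⟩ := hIdeg d f hf
    have hd' : d ∣ n := (Nat.mem_divisors.mp hd).1
    have hdvdg : f ∣ g := irr_dvd hmon hirr (hdeg ▸ hd')
    have hsplits : Splits (f.map (algebraMap Fq L)) :=
      (SplittingField.splits g).of_dvd (Polynomial.map_ne_zero aux) (Polynomial.map_dvd _ hdvdg)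
    have hsep : f.Separable := PerfectField.separable_of_irreducible hirr
    have hroots : Fintype.card (f.rootSet L) = f.natDegree :=
      card_rootSet_eq_natDegree hsep hsplits
    rw [← hdeg, ← hroots, ← Fintype.card_subtype]
    refine Fintype.card_congr (Equiv.subtypeEquivRight fun x => ?_)
    constructor
    · intro hmf
      rw [mem_rootSet_of_ne hmon.ne_zero, ← hmf]
      exact minpoly.aeval Fq x
    · intro hx
      rw [mem_rootSet_of_ne hmon.ne_zero] at hx
      exact (minpoly.eq_of_irreducible_of_monic hirr hx hmon).symm
  have hdisj : (↑n.divisors : Set ℕ).PairwiseDisjoint I := by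
    intro d _ d' _ hne
    refine Finset.disjoint_left.mpr fun f hf hf' => hne ?_
    rw [← (hIdeg d f hf).2.2, (hIdeg d' f hf').2.2]
  have hmain := Finset.card_eq_sum_card_fiberwise (fun (x : L) (_ : x ∈ Finset.univ) => hmem x)
  rw [Finset.card_univ, hcardL] at hmain
  rw [hmain, hT, Finset.sum_biUnion hdisj]
  refine Finset.sum_congr rfl fun d hd => ?_
  rw [Finset.sum_congr rfl (fun f hf => hfiber d hd f hf), Finset.sum_const, smul_eq_mul,
    hInu d, mul_comm]

lemma term_le (Fq : Type*) [Field Fq] [Fintype Fq] {d : ℕ} (hd : d ≠ 0) :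
    d * nu Fq d ≤ (Fintype.card Fq) ^ d := by
  rw [sum_identity Fq hd]
  exact Finset.single_le_sum (f := fun e => e * nu Fq e) (fun e _ => Nat.zero_le _)
    (Nat.mem_divisors_self d hd)

lemma geomsum_le {q : ℕ} (hq : 2 ≤ q) : ∀ k, ∑ d ∈ Finset.range (k + 1), q ^ d ≤ 2 * q ^ k := by
  intro k
  induction k with
  | zero => simpa using hq.trans (by nlinarith)
  | succ k ih =>
      rw [Finset.sum_range_succ]
      have : 2 * q ^ k ≤ q ^ (k + 1) := by
        rw [pow_succ]
        calc 2 * q ^ k = q ^ k * 2 := by ring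
          _ ≤ q ^ k * q := Nat.mul_le_mul_left _ hq
      calc ∑ d ∈ Finset.range (k+1), q ^ d + q ^ (k+1) ≤ 2 * q ^ k + q ^ (k+1) :=
            Nat.add_le_add_right ih _
        _ ≤ q ^ (k+1) + q ^ (k+1) := Nat.add_le_add_right this _
        _ = 2 * q ^ (k+1) := by ring

lemma lower_bound (Fq : Type*) [Field Fq] [Fintype Fq] {n : ℕ} (hn : n ≠ 0) :
    (Fintype.card Fq) ^ n ≤ n * nu Fq n + 2 * (Fintype.card Fq) ^ (n / 2) := by
  classical
  set q := Fintype.card Fq with hq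
  have hq2 : 2 ≤ q := Fintype.one_lt_card
  have hid := sum_identity Fq hn
  rw [← hq] at hid
  rw [← Finset.add_sum_erase _ _ (Nat.mem_divisors_self n hn)] at hid
  have hrest : ∑ d ∈ n.divisors.erase n, d * nu Fq d ≤ 2 * q ^ (n / 2) := by
    calc ∑ d ∈ n.divisors.erase n, d * nu Fq d
        ≤ ∑ d ∈ n.divisors.erase n, q ^ d := by
          refine Finset.sum_le_sum fun d hd => ?_
          have hd0 : d ≠ 0 := Nat.pos_of_mem_divisors (Finset.mem_of_mem_erase hd) |>.ne'
          exact term_le Fq hd0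
      _ ≤ ∑ d ∈ Finset.range (n / 2 + 1), q ^ d := by
          refine Finset.sum_le_sum_of_subset fun d hd => ?_
          rw [Finset.mem_range]
          have hne := Finset.ne_of_mem_erase hd
          obtain ⟨c, hc⟩ := (Nat.mem_divisors.mp (Finset.mem_of_mem_erase hd)).1
          have hc2 : 2 ≤ c := by
            rcases Nat.lt_or_ge c 2 with h | h
            · interval_cases c <;> omega
            · exact h
          have : d * 2 ≤ n := by calc d * 2 ≤ d * c := Nat.mul_le_mul_left d hc2
                                  _ = n := hc.symm
          omega
      _ ≤ 2 * q ^ (n / 2) := geomsum_le hq2 _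
  omega

/-- the prime polynomial theorem: `ν_i ~ q^i / i`, i.e.
`ν_i · i / q^i → 1` as `i → ∞`. -/
theorem prime_polynomial_asymptotics (q : ℕ) (hq : 2 ≤ q) (Fq : Type*) [Field Fq]
    [Fintype Fq] (hcard : Fintype.card Fq = q) :
    Tendsto (fun i : ℕ => (nu Fq i : ℝ) * (i : ℝ) / (q : ℝ) ^ i) atTop (𝓝 1) := by

  have hq1 : (1 : ℝ) < q := by exact_mod_cast hq
  have hqpos : ∀ i : ℕ, (0 : ℝ) < (q : ℝ) ^ i := fun i => by positivity
  have hhalf : Tendsto (fun i : ℕ => i - i / 2) atTop atTop := by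
    refine tendsto_atTop.mpr fun b => eventually_atTop.mpr ⟨2 * b, fun i hi => ?_⟩
    omega
  have hpow : Tendsto (fun i : ℕ => (q : ℝ) ^ (i - i / 2)) atTop atTop :=
    (tendsto_pow_atTop_atTop_of_one_lt hq1).comp hhalf
  have herr : Tendsto (fun i : ℕ => 2 / (q : ℝ) ^ (i - i / 2)) atTop (𝓝 0) :=
    Tendsto.div_atTop tendsto_const_nhds hpow
  have hlow : Tendsto (fun i : ℕ => 1 - 2 / (q : ℝ) ^ (i - i / 2)) atTop (𝓝 1) := by
    simpa using tendsto_const_nhds.sub herr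
  refine tendsto_of_tendsto_of_tendsto_of_le_of_le' hlow tendsto_const_nhds ?_ ?_
  · filter_upwards [eventually_ge_atTop 1] with i hi
    have hi0 : i ≠ 0 := by omega
    have h1 : (q : ℝ) ^ i ≤ (i : ℝ) * (nu Fq i : ℝ) + 2 * (q : ℝ) ^ (i / 2) := by
      have := lower_bound Fq hi0
      rw [hcard] at this
      exact_mod_cast this
    have hsplit : (q : ℝ) ^ i = (q : ℝ) ^ (i / 2) * (q : ℝ) ^ (i - i / 2) := by
      rw [← pow_add]
      congr 1
      omega
    have h2 : 2 * (q : ℝ) ^ (i / 2) / (q : ℝ) ^ i = 2 / (q : ℝ) ^ (i - i / 2) := by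
      rw [hsplit]
      field_simp
    have key : (1:ℝ) ≤ ((nu Fq i : ℝ) * i + 2 * (q:ℝ)^(i/2)) / (q:ℝ)^i := by
      rw [one_le_div (hqpos i)]
      linarith [h1]
    have hsum : ((nu Fq i : ℝ) * i + 2 * (q:ℝ)^(i/2)) / (q:ℝ)^i
        = (nu Fq i : ℝ) * i / (q:ℝ)^i + 2 * (q:ℝ)^(i/2) / (q:ℝ)^i := add_div _ _ _
    linarith [key, hsum, h2]
  · filter_upwards [eventually_ge_atTop 1] with i hi
    have hi0 : i ≠ 0 := by omega
    have h1 : (nu Fq i : ℝ) * (i : ℝ) ≤ (q : ℝ) ^ i := by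
      have := term_le Fq hi0
      rw [hcard] at this
      calc (nu Fq i : ℝ) * i = ((i * nu Fq i : ℕ) : ℝ) := by push_cast; ring
        _ ≤ (q : ℝ) ^ i := by exact_mod_cast this
    exact div_le_one_of_le₀ h1 (hqpos i).le
end

section
/- Let q ≥ 2, let F_q be a finite field with q elements, and for each k let d_k = lim_{n→∞} e_{n,k}/q^n, where e_{n,k} is the number of monic polynomials of degree n over F_q with excess k. Then ∑_{k≥0} d_k = 1. -/
open Polynomial Filter Topology

section Aux

variable {Fq : Type*} [Field Fq] [Fintype Fq]

open scoped Classical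
open UniqueFactorizationMonoid

variable {Fq : Type*} [Field Fq] [Fintype Fq]

lemma monic_set_eq (n : ℕ) : {f : Polynomial Fq | f.Monic ∧ f.natDegree = n} =
    (fun g : Polynomial Fq => X ^ n + g) '' (degreeLT Fq n : Set (Polynomial Fq)) := by
  ext f
  constructor
  · rintro ⟨hm, rfl⟩
    refine ⟨f - X ^ f.natDegree, ?_, by ring⟩
    rw [SetLike.mem_coe, mem_degreeLT]
    have := degree_sub_lt (q := X ^ f.natDegree) ?_ hm.ne_zero ?_
    · exact lt_of_lt_of_le this (degree_le_natDegree)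
    · rw [degree_X_pow, degree_eq_natDegree hm.ne_zero]
    · rw [hm.leadingCoeff, (monic_X_pow _).leadingCoeff]
  · rintro ⟨g, hg, rfl⟩
    rw [SetLike.mem_coe, mem_degreeLT] at hg
    have hmon : (X ^ n + g).Monic := monic_X_pow_add hg
    refine ⟨hmon, ?_⟩
    have hdeg : (X ^ n + g).degree = (n : WithBot ℕ) := by
      rw [degree_add_eq_left_of_degree_lt (by rwa [degree_X_pow]), degree_X_pow]
    exact natDegree_eq_of_degree_eq_some hdeg

instance (n : ℕ) : Finite (degreeLT Fq n) :=
  Finite.of_equiv _ (degreeLTEquiv Fq n).toEquiv.symm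

instance (n : ℕ) : Finite (degreeLT Fq n : Set (Polynomial Fq)) :=
  Finite.of_equiv _ (degreeLTEquiv Fq n).toEquiv.symm

lemma monic_finite (n : ℕ) : {f : Polynomial Fq | f.Monic ∧ f.natDegree = n}.Finite := by
  rw [monic_set_eq]
  exact Set.Finite.image _ (Set.toFinite _)

lemma monic_ncard (n : ℕ) :
    {f : Polynomial Fq | f.Monic ∧ f.natDegree = n}.ncard = Fintype.card Fq ^ n := by
  rw [monic_set_eq, Set.ncard_image_of_injective _ (add_right_injective _),
    ← Nat.card_coe_set_eq]
  have : Nat.card (degreeLT Fq n) = Nat.card (Fin n → Fq) :=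
    Nat.card_congr (degreeLTEquiv Fq n).toEquiv
  simpa [Nat.card_eq_fintype_card] using this

lemma monic_of_normalized_factor {f p : Polynomial Fq} (hp : p ∈ normalizedFactors f) :
    p.Monic := by
  have h1 : normalize p = p := normalize_normalized_factor p hp
  have h2 : p ≠ 0 := (irreducible_of_normalized_factor p hp).ne_zero
  rw [← h1]; exact monic_normalize h2

lemma monic_prod_factors {f : Polynomial Fq} : ((normalizedFactors f).prod).Monic := by
  have h := monic_multiset_prod_of_monic (normalizedFactors f) id
    (fun p hp => monic_of_normalized_factor hp)
  simpa using h

lemma monic_eq_prod_normalizedFactors {f : Polynomial Fq} (hm : f.Monic) :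
    f = (normalizedFactors f).prod :=
  (Polynomial.eq_of_monic_of_associated monic_prod_factors hm
    (prod_normalizedFactors hm.ne_zero)).symm

lemma natDegree_eq_sum_factors {f : Polynomial Fq} (hm : f.Monic) :
    f.natDegree = ((normalizedFactors f).map natDegree).sum := by
  conv_lhs => rw [monic_eq_prod_normalizedFactors hm]
  exact natDegree_multiset_prod_of_monic _ fun p hp => monic_of_normalized_factor hp

lemma card_factors_le_natDegree {f : Polynomial Fq} (hm : f.Monic) :
    Multiset.card (normalizedFactors f) ≤ f.natDegree := by
  rw [natDegree_eq_sum_factors hm]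
  calc Multiset.card (normalizedFactors f)
      = ((normalizedFactors f).map (fun _ => 1)).sum := by simp
    _ ≤ ((normalizedFactors f).map natDegree).sum := by
        apply Multiset.sum_map_le_sum_map
        intro p hp
        exact natDegree_pos_iff_degree_pos.mpr
          (degree_pos_of_irreducible (UniqueFactorizationMonoid.irreducible_of_normalized_factor p hp))

lemma excess_le_natDegree {f : Polynomial Fq} (hm : f.Monic) : excess f ≤ f.natDegree :=
  le_trans (Nat.sub_le _ _) (card_factors_le_natDegree hm)

lemma exists_sq_decomp {f : Polynomial Fq} (hm : f.Monic) :
    ∃ v h : Polynomial Fq, v.Monic ∧ h.Monic ∧ f = v ^ 2 * h ∧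
      excess f ≤ 2 * v.natDegree := by
  set M := normalizedFactors f with hM
  set v := ∏ p ∈ M.toFinset, p ^ (M.count p / 2) with hv
  have hmem : ∀ p ∈ M.toFinset, p ∈ M := fun p hp => Multiset.mem_toFinset.mp hp
  have hvm : v.Monic := monic_prod_of_monic _ _
    (fun p hp => (monic_of_normalized_factor (hmem p hp)).pow _)
  have hdvd : v ^ 2 ∣ f := by
    conv_rhs => rw [monic_eq_prod_normalizedFactors hm]
    rw [Finset.prod_multiset_count, hv, ← Finset.prod_pow]
    apply Finset.prod_dvd_prod_of_dvd
    intro p hp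
    rw [← pow_mul, ← hM]
    exact pow_dvd_pow p (by omega)
  obtain ⟨h, hfh⟩ := hdvd
  have hhm : h.Monic := (hvm.pow 2).of_mul_monic_left (hfh ▸ hm)
  refine ⟨v, h, hvm, hhm, hfh, ?_⟩
  have hdeg : v.natDegree = ∑ p ∈ M.toFinset, (M.count p / 2) * p.natDegree := by
    rw [hv, natDegree_prod_of_monic _ _
      (fun p hp => (monic_of_normalized_factor (hmem p hp)).pow _)]
    simp only [natDegree_pow]
  have h1 : ∀ p ∈ M.toFinset, 1 ≤ p.natDegree := fun p hp =>
    natDegree_pos_iff_degree_pos.mpr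
      (degree_pos_of_irreducible (irreducible_of_normalized_factor p (hmem p hp)))
  have hk : excess f ≤ 2 * ∑ p ∈ M.toFinset, (M.count p / 2) := by
    show Multiset.card M - M.toFinset.card ≤ _
    rw [← Multiset.toFinset_sum_count_eq]
    have h2 : ∑ p ∈ M.toFinset, M.count p ≤
        ∑ p ∈ M.toFinset, (2 * (M.count p / 2) + 1) :=
      Finset.sum_le_sum (fun p hp => by omega)
    rw [Finset.sum_add_distrib, Finset.sum_const, smul_eq_mul, mul_one,
      ← Finset.mul_sum] at h2
    omega
  calc excess f ≤ 2 * ∑ p ∈ M.toFinset, (M.count p / 2) := hk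
    _ ≤ 2 * ∑ p ∈ M.toFinset, (M.count p / 2) * p.natDegree := by
        apply Nat.mul_le_mul_left
        exact Finset.sum_le_sum (fun p hp => Nat.le_mul_of_pos_right _ (h1 p hp))
    _ = 2 * v.natDegree := by rw [hdeg]

lemma geom_sum_le (q t : ℕ) (hq : 2 ≤ q) : ∑ j ∈ Finset.range (t + 1), q ^ j ≤ 2 * q ^ t := by
  induction t with
  | zero => simp
  | succ t ih =>
      rw [Finset.sum_range_succ]
      have : 2 * q ^ t + q ^ (t + 1) ≤ 2 * q ^ (t + 1) := by
        rw [pow_succ]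
        nlinarith [pow_pos (show 0 < q by omega) t]
      omega

lemma excessCount_bound (n k : ℕ) (hq : 2 ≤ Fintype.card Fq) :
    excessCount Fq n k * Fintype.card Fq ^ ((k + 1) / 2) ≤ 2 * Fintype.card Fq ^ n := by
  set q := Fintype.card Fq with hqdef
  set c := (k + 1) / 2 with hc
  set Sfin : ℕ → Finset (Polynomial Fq) := fun m => (monic_finite (Fq := Fq) m).toFinset
    with hSfin
  have hScard : ∀ m, (Sfin m).card = q ^ m := by
    intro m
    rw [hSfin, ← Set.ncard_eq_toFinset_card _ (monic_finite m), monic_ncard]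
  -- the target set is contained in a biUnion of images
  set B : Finset (Polynomial Fq) := (Finset.Icc c (n / 2)).biUnion
    (fun m => ((Sfin m) ×ˢ (Sfin (n - 2 * m))).image (fun p => p.1 ^ 2 * p.2)) with hB
  have hsub : {f : Polynomial Fq | f.Monic ∧ f.natDegree = n ∧ excess f = k} ⊆ ↑B := by
    rintro f ⟨hm, hdeg, hex⟩
    obtain ⟨v, h, hvm, hhm, hfh, hk⟩ := exists_sq_decomp hm
    have hn : n = 2 * v.natDegree + h.natDegree := by
      rw [← hdeg, hfh, (hvm.pow 2).natDegree_mul hhm, natDegree_pow]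
    rw [Finset.coe_biUnion]
    simp only [Set.mem_iUnion, Finset.mem_coe, Finset.mem_image]
    refine ⟨v.natDegree, ?_, (v, h), ?_, by rw [hfh]⟩
    · rw [Finset.mem_Icc]; omega
    · rw [Finset.mem_product, hSfin]
      constructor
      · rw [Set.Finite.mem_toFinset]; exact ⟨hvm, rfl⟩
      · rw [Set.Finite.mem_toFinset]
        exact ⟨hhm, show h.natDegree = n - 2 * v.natDegree by omega⟩
  have hcount : excessCount Fq n k ≤ B.card := by
    rw [excessCount, ← Set.ncard_coe_finset]
    exact Set.ncard_le_ncard hsub (Finset.finite_toSet B)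
  have hBcard : B.card ≤ ∑ m ∈ Finset.Icc c (n / 2), q ^ (n - m) := by
    refine le_trans (Finset.card_biUnion_le) (Finset.sum_le_sum ?_)
    intro m hm
    rw [Finset.mem_Icc] at hm
    calc (((Sfin m) ×ˢ (Sfin (n - 2 * m))).image (fun p => p.1 ^ 2 * p.2)).card
        ≤ ((Sfin m) ×ˢ (Sfin (n - 2 * m))).card := Finset.card_image_le
      _ = q ^ m * q ^ (n - 2 * m) := by rw [Finset.card_product, hScard, hScard]
      _ = q ^ (n - m) := by rw [← pow_add]; congr 1; omega
  -- now the geometric estimate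
  by_cases hcn : c ≤ n / 2
  · have hsum : ∑ m ∈ Finset.Icc c (n / 2), q ^ (n - m) ≤ 2 * q ^ (n - c) := by
      have hinj : ∀ x ∈ Finset.Icc c (n / 2), ∀ y ∈ Finset.Icc c (n / 2),
          n - x = n - y → x = y := by
        intro a ha b hb hab; rw [Finset.mem_Icc] at ha hb; omega
      have himg : ∑ m ∈ Finset.Icc c (n / 2), q ^ (n - m)
          ≤ ∑ j ∈ Finset.range (n - c + 1), q ^ j := by
        rw [show (∑ m ∈ Finset.Icc c (n / 2), q ^ (n - m)) =
            ∑ j ∈ (Finset.Icc c (n / 2)).image (fun m => n - m), q ^ j from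
          (Finset.sum_image hinj).symm]
        apply Finset.sum_le_sum_of_subset_of_nonneg
        · intro j hj
          simp only [Finset.mem_image, Finset.mem_Icc] at hj
          obtain ⟨m, hm, rfl⟩ := hj
          rw [Finset.mem_range]; omega
        · intro i _ _; positivity
      exact le_trans himg (geom_sum_le q (n - c) hq)
    calc excessCount Fq n k * q ^ c ≤ (2 * q ^ (n - c)) * q ^ c := by
          exact Nat.mul_le_mul_right _ (le_trans hcount (le_trans hBcard hsum))
      _ = 2 * q ^ n := by
          rw [mul_assoc, ← pow_add,
            Nat.sub_add_cancel (le_trans hcn (Nat.div_le_self n 2))]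
  · have : excessCount Fq n k = 0 := by
      have : B = ∅ := by rw [hB, Finset.Icc_eq_empty (by omega), Finset.biUnion_empty]
      rw [this] at hcount
      simpa using hcount
    rw [this, Nat.zero_mul]; exact Nat.zero_le _

lemma excessCount_sum (n : ℕ) :
    ∑ k ∈ Finset.range (n + 1), excessCount Fq n k = Fintype.card Fq ^ n := by
  have hfin := monic_finite (Fq := Fq) n
  have key : ∀ k, excessCount Fq n k = (hfin.toFinset.filter (fun f => excess f = k)).card := by
    intro k
    rw [excessCount, ← Set.ncard_coe_finset]
    congr 1
    ext f
    simp only [Finset.coe_filter, Set.Finite.mem_toFinset, Set.mem_setOf_eq]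
    tauto
  simp only [key]
  rw [← monic_ncard n, Set.ncard_eq_toFinset_card _ hfin]
  exact (Finset.card_eq_sum_card_fiberwise (fun f hf => by
    rw [Finset.mem_coe, Finset.mem_range]
    have hmem := Set.Finite.mem_toFinset hfin |>.mp hf
    have hle := excess_le_natDegree hmem.1
    have h2 := hmem.2
    omega)).symm

end Aux

/-- the densities `d_k` sum to `1`. -/
theorem densities_sum_to_one (q : ℕ) (hq : 2 ≤ q) (Fq : Type*) [Field Fq] [Fintype Fq]
    (hcard : Fintype.card Fq = q) (d : ℕ → ℝ)
    (hd : ∀ k, Tendsto (fun n : ℕ => (excessCount Fq n k : ℝ) / (q : ℝ) ^ n) atTop (𝓝 (d k))) :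
    HasSum d 1 := by
  have hq1 : (1 : ℝ) < q := by exact_mod_cast hq.trans_lt' one_lt_two
  have hq0 : (0 : ℝ) < q := lt_trans one_pos hq1
  set a : ℕ → ℕ → ℝ := fun n k => (excessCount Fq n k : ℝ) / (q : ℝ) ^ n with ha
  set b : ℕ → ℝ := fun k => 2 / (q : ℝ) ^ ((k + 1) / 2) with hb
  have ha_nonneg : ∀ n k, 0 ≤ a n k := fun n k => by positivity
  have hb_nonneg : ∀ k, 0 ≤ b k := fun k => by positivity
  have hab : ∀ n k, a n k ≤ b k := by
    intro n k
    have hnat := excessCount_bound (Fq := Fq) n k (by omega)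
    rw [hcard] at hnat
    have hreal : (excessCount Fq n k : ℝ) * (q : ℝ) ^ ((k + 1) / 2) ≤ 2 * (q : ℝ) ^ n := by
      exact_mod_cast hnat
    rw [ha, hb]
    rw [div_le_div_iff₀ (by positivity) (by positivity)]
    calc (excessCount Fq n k : ℝ) * (q : ℝ) ^ ((k + 1) / 2)
        ≤ 2 * (q : ℝ) ^ n := hreal
      _ = 2 * (q : ℝ) ^ n := rfl
  have hsum1 : ∀ n, ∑ k ∈ Finset.range (n + 1), a n k = 1 := by
    intro n
    have hnat := excessCount_sum (Fq := Fq) n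
    rw [hcard] at hnat
    rw [ha]
    simp only
    rw [← Finset.sum_div]
    rw [div_eq_one_iff_eq (by positivity)]
    exact_mod_cast hnat
  -- summability of b
  set r : ℝ := (Real.sqrt q)⁻¹ with hr
  have hsq1 : 1 < Real.sqrt q := by
    rw [show (1 : ℝ) = Real.sqrt 1 by simp]
    exact Real.sqrt_lt_sqrt (by norm_num) hq1
  have hr0 : 0 ≤ r := by positivity
  have hr1 : r < 1 := by
    rw [hr, inv_lt_one_iff₀]; right; exact hsq1
  have hble : ∀ k, b k ≤ (2 * Real.sqrt q) * r ^ k := by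
    intro k
    have hpow : (q : ℝ) ^ ((k + 1) / 2) = Real.sqrt q ^ (2 * ((k + 1) / 2)) := by
      rw [pow_mul, Real.sq_sqrt hq0.le]
    have key : (1 : ℝ) ≤ r ^ k * (q : ℝ) ^ ((k + 1) / 2) := by
      rw [hpow, hr, inv_pow, mul_comm,
        ← pow_sub₀ _ (by positivity) (by omega : k ≤ 2 * ((k + 1) / 2))]
      exact one_le_pow₀ hsq1.le
    have hqc : (0 : ℝ) < (q : ℝ) ^ ((k + 1) / 2) := by positivity
    calc b k = 2 / (q : ℝ) ^ ((k + 1) / 2) := rfl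
      _ ≤ 2 * r ^ k := by rw [div_le_iff₀ hqc]; nlinarith [key]
      _ ≤ (2 * Real.sqrt q) * r ^ k := by nlinarith [pow_nonneg hr0 k, hsq1]
  have hb_sum : Summable b :=
    Summable.of_nonneg_of_le hb_nonneg hble
      ((summable_geometric_of_lt_one hr0 hr1).mul_left _)
  have hd0 : ∀ k, 0 ≤ d k := fun k => ge_of_tendsto' (hd k) (fun n => ha_nonneg n k)
  have hdb : ∀ k, d k ≤ b k := fun k => le_of_tendsto' (hd k) (fun n => hab n k)
  have hds : Summable d := Summable.of_nonneg_of_le hd0 hdb hb_sum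
  have hpartial : Tendsto (fun K => ∑ k ∈ Finset.range K, d k) atTop (𝓝 (∑' k, d k)) :=
    hds.hasSum.tendsto_sum_nat
  have hbpartial : Tendsto (fun K => ∑ k ∈ Finset.range K, b k) atTop (𝓝 (∑' k, b k)) :=
    hb_sum.hasSum.tendsto_sum_nat
  have hTto : Tendsto (fun K => (∑' k, b k) - ∑ k ∈ Finset.range K, b k) atTop (𝓝 0) := by
    have := (tendsto_const_nhds (x := ∑' k, b k) (f := atTop (α := ℕ))).sub hbpartial
    simpa using this
  have hup : ∀ K, ∑ k ∈ Finset.range K, d k ≤ 1 := by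
    intro K
    apply le_of_tendsto (tendsto_finset_sum _ (fun k _ => hd k))
    filter_upwards [eventually_ge_atTop K] with n hn
    calc ∑ k ∈ Finset.range K, a n k
        ≤ ∑ k ∈ Finset.range (n + 1), a n k :=
          Finset.sum_le_sum_of_subset_of_nonneg (Finset.range_subset_range.mpr (by omega))
            (fun i _ _ => ha_nonneg n i)
      _ = 1 := hsum1 n
  have hlow : ∀ K, 1 - ((∑' k, b k) - ∑ k ∈ Finset.range K, b k)
      ≤ ∑ k ∈ Finset.range K, d k := by
    intro K
    apply ge_of_tendsto (tendsto_finset_sum _ (fun k _ => hd k))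
    filter_upwards [eventually_ge_atTop K] with n hn
    have hsplit : ∑ k ∈ Finset.range K, a n k + ∑ k ∈ Finset.Ico K (n + 1), a n k
        = ∑ k ∈ Finset.range (n + 1), a n k :=
      Finset.sum_range_add_sum_Ico _ (by omega)
    have hbsplit : ∑ k ∈ Finset.range K, b k + ∑ k ∈ Finset.Ico K (n + 1), b k
        = ∑ k ∈ Finset.range (n + 1), b k :=
      Finset.sum_range_add_sum_Ico _ (by omega)
    have hble2 : ∑ k ∈ Finset.range (n + 1), b k ≤ ∑' k, b k :=
      Summable.sum_le_tsum _ (fun i _ => hb_nonneg i) hb_sum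
    have htail : ∑ k ∈ Finset.Ico K (n + 1), a n k ≤ ∑ k ∈ Finset.Ico K (n + 1), b k :=
      Finset.sum_le_sum (fun k _ => hab n k)
    have h1 := hsum1 n
    linarith
  have h1 : Tendsto (fun K => ∑ k ∈ Finset.range K, d k) atTop (𝓝 1) := by
    apply tendsto_of_tendsto_of_tendsto_of_le_of_le
      (g := fun K => 1 - ((∑' k, b k) - ∑ k ∈ Finset.range K, b k))
      (h := fun _ => 1) ?_ tendsto_const_nhds hlow hup
    simpa using tendsto_const_nhds.sub hTto
  have heq : ∑' k, d k = 1 := tendsto_nhds_unique hpartial h1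
  exact heq ▸ hds.hasSum
end
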